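/- arXiv:1207.3728 — 2 statements merged into one kernel-verified Lean document; each statement's English description precedes it below -/
import Mathlib

section
/- Let u : ℤ → ℂ be a sequence with Fourier-type coefficients, p ≥ 2 an integer, s ≥ 0, and N ≥ 1. Define X_k(u) = Σ_{k = j₁+⋯+j_p} u_{j₁}⋯u_{j_p} and the sparse approximation X_k^N(u) = Σ_{k = j₁+⋯+j_p, ⟨j₁⟩⋯⟨j_p⟩ ≤ N} u_{j₁}⋯u_{j_p}, where ⟨j⟩ = max(1,|j|). Then Σ_{k ∈ ℤ} |X_k(u) − X_k^N(u)| ≤ N^{−s} (Σ_{j ∈ ℤ} ⟨j⟩^s |u_j|)^p, provided the right-hand side is finite. -/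
open scoped ENNReal NNReal BigOperators

noncomputable section

/-- The weight `⟨j⟩ = max(1, |j|)` for `j ∈ ℤ`. -/
def wt1 (j : ℤ) : ℕ := max 1 j.natAbs

/-- `X_k(u) = Σ_{j₁+⋯+j_p = k} u_{j₁}⋯u_{j_p}`. -/
def Xk (u : ℤ → ℂ) (p : ℕ) (k : ℤ) : ℂ :=
  ∑' j : {j : Fin p → ℤ // ∑ i, j i = k}, ∏ i, u (j.1 i)

/-- The sparse approximation `X_k^N(u)`, restricting to `⟨j₁⟩⋯⟨j_p⟩ ≤ N`. -/
def XkN (u : ℤ → ℂ) (p N : ℕ) (k : ℤ) : ℂ :=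
  ∑' j : {j : Fin p → ℤ // (∑ i, j i = k) ∧ ∏ i, wt1 (j i) ≤ N}, ∏ i, u (j.1 i)

set_option maxHeartbeats 1000000

lemma tsum_pi_prod (g : ℤ → ℝ≥0∞) (p : ℕ) :
    ∑' j : Fin p → ℤ, ∏ i, g (j i) = (∑' n : ℤ, g n) ^ p := by
  induction p with
  | zero =>
    rw [tsum_eq_single (Fin.elim0 : Fin 0 → ℤ)
      (fun b hb => absurd (Subsingleton.elim b _) hb)]
    simp
  | succ n ih =>
    rw [← (Fin.consEquiv (fun _ : Fin (n+1) => ℤ)).tsum_eq]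
    have key : ∀ x : ℤ × (Fin n → ℤ), ∏ i, g ((Fin.consEquiv (fun _ : Fin (n+1) => ℤ)) x i)
        = g x.1 * ∏ i, g (x.2 i) := by
      intro x
      have h1 : (fun i => g ((Fin.consEquiv (fun _ : Fin (n+1) => ℤ)) x i))
          = Fin.cons (g x.1) (g ∘ x.2) := by
        have := Fin.comp_cons g x.1 x.2
        simpa [Fin.consEquiv, funext_iff, Function.comp] using this
      calc ∏ i, g ((Fin.consEquiv (fun _ : Fin (n+1) => ℤ)) x i)
          = ∏ i, Fin.cons (g x.1) (g ∘ x.2) i := by rw [h1]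
        _ = g x.1 * ∏ i, g (x.2 i) := Fin.prod_cons _ _
    rw [tsum_congr key, ENNReal.tsum_prod']
    simp_rw [ENNReal.tsum_mul_left, ENNReal.tsum_mul_right, ih]
    ring

theorem stmt1 (p : ℕ) (hp : 2 ≤ p) (s : ℝ) (hs : 0 ≤ s) (N : ℕ) (hN : 1 ≤ N)
    (u : ℤ → ℂ)
    (hu : (∑' j : ℤ, ENNReal.ofReal ((wt1 j : ℝ) ^ s) * (‖u j‖₊ : ℝ≥0∞)) ≠ ⊤) :
    ∑' k : ℤ, (‖Xk u p k - XkN u p N k‖₊ : ℝ≥0∞) ≤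
      ENNReal.ofReal ((N : ℝ) ^ (-s)) *
        (∑' j : ℤ, ENNReal.ofReal ((wt1 j : ℝ) ^ s) * (‖u j‖₊ : ℝ≥0∞)) ^ p := by
  classical
  set w : ℤ → ℝ≥0∞ := fun j => ENNReal.ofReal ((wt1 j : ℝ) ^ s) * (‖u j‖₊ : ℝ≥0∞) with hwdef
  set f : (Fin p → ℤ) → ℂ := fun j => ∏ i, u (j i) with hfdef
  set G : (Fin p → ℤ) → ℝ≥0∞ := fun j => ∏ i, (‖u (j i)‖₊ : ℝ≥0∞) with hGdef
  have hwt : ∀ j : ℤ, (1:ℝ) ≤ (wt1 j : ℝ) := fun j => by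
    exact_mod_cast (le_max_left 1 j.natAbs : 1 ≤ wt1 j)
  have hone : ∀ j : ℤ, (1:ℝ≥0∞) ≤ ENNReal.ofReal ((wt1 j : ℝ) ^ s) := by
    intro j
    rw [show (1:ℝ≥0∞) = ENNReal.ofReal 1 by simp]
    exact ENNReal.ofReal_le_ofReal (Real.one_le_rpow (hwt j) hs)
  have hw1 : ∀ j, (‖u j‖₊ : ℝ≥0∞) ≤ w j := by
    intro j
    calc (‖u j‖₊ : ℝ≥0∞) = 1 * (‖u j‖₊ : ℝ≥0∞) := (one_mul _).symm
      _ ≤ w j := mul_le_mul_left (hone j) _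
  have hA : (∑' j : ℤ, (‖u j‖₊ : ℝ≥0∞)) ≠ ⊤ :=
    ne_top_of_le_ne_top hu (ENNReal.tsum_le_tsum hw1)
  -- norm of products
  have hFnorm : ∀ j : Fin p → ℤ, (‖f j‖₊ : ℝ≥0∞) = G j := by
    intro j
    simp [hfdef, hGdef, nnnorm_prod, ENNReal.coe_finset_prod]
  have hGtop : (∑' j : Fin p → ℤ, G j) ≠ ⊤ := by
    rw [hGdef]
    rw [tsum_pi_prod (fun n => (‖u n‖₊ : ℝ≥0∞)) p]
    exact ENNReal.pow_ne_top hA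
  have hfn : Summable (fun j : Fin p → ℤ => ‖f j‖₊) := by
    rw [← ENNReal.tsum_coe_ne_top_iff_summable]
    simpa only [hFnorm] using hGtop
  have hf : Summable f := hfn.of_nnnorm
  -- decomposition of Xk - XkN
  have hdiff : ∀ k : ℤ, Xk u p k - XkN u p N k
      = ∑' j : (Fin p → ℤ),
          Set.indicator {j | (∑ i, j i = k) ∧ N < ∏ i, wt1 (j i)} f j := by
    intro k
    have h1 : Xk u p k = ∑' j, Set.indicator {j | ∑ i, j i = k} f j :=
      tsum_subtype {j : Fin p → ℤ | ∑ i, j i = k} f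
    have h2 : XkN u p N k
        = ∑' j, Set.indicator {j | (∑ i, j i = k) ∧ ∏ i, wt1 (j i) ≤ N} f j :=
      tsum_subtype {j : Fin p → ℤ | (∑ i, j i = k) ∧ ∏ i, wt1 (j i) ≤ N} f
    have hsplit : ∀ j, Set.indicator {j | ∑ i, j i = k} f j
        = Set.indicator {j | (∑ i, j i = k) ∧ ∏ i, wt1 (j i) ≤ N} f j
          + Set.indicator {j | (∑ i, j i = k) ∧ N < ∏ i, wt1 (j i)} f j := by
      intro j
      by_cases hk : ∑ i, j i = k
      · by_cases hb : ∏ i, wt1 (j i) ≤ N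
        · simp [Set.indicator_apply, hk, hb, not_lt.2 hb]
        · simp [Set.indicator_apply, hk, hb, lt_of_not_ge hb]
      · simp [Set.indicator_apply, hk]
    rw [h1, h2, tsum_congr hsplit,
      Summable.tsum_add (hf.indicator _) (hf.indicator _)]
    ring
  -- per-k norm bound
  have hnorm : ∀ k : ℤ, (‖Xk u p k - XkN u p N k‖₊ : ℝ≥0∞)
      ≤ ∑' j : Fin p → ℤ,
          Set.indicator {j | (∑ i, j i = k) ∧ N < ∏ i, wt1 (j i)} G j := by
    intro k
    rw [hdiff k]
    set S := {j : Fin p → ℤ | (∑ i, j i = k) ∧ N < ∏ i, wt1 (j i)}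
    have hindn : ∀ j, ‖Set.indicator S f j‖₊ = Set.indicator S (fun j => ‖f j‖₊) j := by
      intro j
      by_cases hj : j ∈ S <;> simp [Set.indicator_apply, hj]
    have hsumind : Summable (fun j => ‖Set.indicator S f j‖₊) :=
      Summable.congr (NNReal.summable_of_le
        (fun j => Set.indicator_le_self S (fun j => ‖f j‖₊) j) hfn)
        (fun j => (hindn j).symm)
    calc (‖∑' j, Set.indicator S f j‖₊ : ℝ≥0∞)
        ≤ ((∑' j, ‖Set.indicator S f j‖₊ : ℝ≥0) : ℝ≥0∞) :=
          ENNReal.coe_le_coe.2 (nnnorm_tsum_le hsumind)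
      _ = ∑' j, (‖Set.indicator S f j‖₊ : ℝ≥0∞) := ENNReal.coe_tsum hsumind
      _ = ∑' j, Set.indicator S G j := by
          refine tsum_congr fun j => ?_
          by_cases hj : j ∈ S
          · simp [Set.indicator_of_mem hj, hFnorm]
          · simp [Set.indicator_of_notMem hj]
  -- swap sums
  have hswap : (∑' k : ℤ, ∑' j : Fin p → ℤ,
        Set.indicator {j | (∑ i, j i = k) ∧ N < ∏ i, wt1 (j i)} G j)
      = ∑' j : Fin p → ℤ, Set.indicator {j | N < ∏ i, wt1 (j i)} G j := by
    rw [ENNReal.tsum_comm]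
    refine tsum_congr fun j => ?_
    by_cases hB : N < ∏ i, wt1 (j i)
    · rw [tsum_eq_single (∑ i, j i) ?_]
      · simp [Set.indicator_apply, hB]
      · intro k hk
        exact Set.indicator_of_notMem (fun h => hk h.1.symm) G
    · simp [Set.indicator_apply, hB]
  -- pointwise bound on the bad set
  have hpoint : ∀ j : Fin p → ℤ, Set.indicator {j | N < ∏ i, wt1 (j i)} G j
      ≤ ENNReal.ofReal ((N : ℝ) ^ (-s)) * ∏ i, w (j i) := by
    intro j
    by_cases hB : N < ∏ i, wt1 (j i)
    · rw [Set.indicator_of_mem (show j ∈ {j : Fin p → ℤ | N < ∏ i, wt1 (j i)} from hB) G]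
      have hprodw : ∏ i, w (j i)
          = ENNReal.ofReal ((∏ i, (wt1 (j i) : ℝ)) ^ s) * G j := by
        rw [hwdef, hGdef, Finset.prod_mul_distrib]
        congr 1
        rw [← Real.finset_prod_rpow _ _ (fun i _ => le_trans zero_le_one (hwt (j i))) s,
          ENNReal.ofReal_prod_of_nonneg]
        intro i _
        exact Real.rpow_nonneg (le_trans zero_le_one (hwt (j i))) s
      have hNpos : (0:ℝ) < (N:ℝ) := by exact_mod_cast hN
      have hcast : (N:ℝ) ≤ ∏ i, (wt1 (j i) : ℝ) := by
        have : (N:ℝ) ≤ ((∏ i, wt1 (j i) : ℕ) : ℝ) := by exact_mod_cast hB.le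
        simpa [Nat.cast_prod] using this
      have hge : (1:ℝ) ≤ (N:ℝ) ^ (-s) * (∏ i, (wt1 (j i) : ℝ)) ^ s := by
        have h1 : (N:ℝ) ^ s ≤ (∏ i, (wt1 (j i) : ℝ)) ^ s :=
          Real.rpow_le_rpow hNpos.le hcast hs
        have h2 : (N:ℝ) ^ (-s) * (N:ℝ) ^ s = 1 := by
          rw [← Real.rpow_add hNpos]; simp
        calc (1:ℝ) = (N:ℝ) ^ (-s) * (N:ℝ) ^ s := h2.symm
          _ ≤ _ := by
            have : (0:ℝ) ≤ (N:ℝ) ^ (-s) := (Real.rpow_pos_of_pos hNpos _).le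
            exact mul_le_mul_of_nonneg_left h1 this
      have hone' : (1:ℝ≥0∞) ≤ ENNReal.ofReal ((N : ℝ) ^ (-s))
          * ENNReal.ofReal ((∏ i, (wt1 (j i) : ℝ)) ^ s) := by
        rw [← ENNReal.ofReal_mul (Real.rpow_pos_of_pos hNpos _).le]
        rw [show (1:ℝ≥0∞) = ENNReal.ofReal 1 by simp]
        exact ENNReal.ofReal_le_ofReal hge
      calc G j = 1 * G j := (one_mul _).symm
        _ ≤ (ENNReal.ofReal ((N : ℝ) ^ (-s))
              * ENNReal.ofReal ((∏ i, (wt1 (j i) : ℝ)) ^ s)) * G j :=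
            mul_le_mul_left hone' _
        _ = ENNReal.ofReal ((N : ℝ) ^ (-s)) * ∏ i, w (j i) := by
            rw [hprodw]; ring
    · rw [Set.indicator_of_notMem (show j ∉ {j : Fin p → ℤ | N < ∏ i, wt1 (j i)} from hB) G]
      exact zero_le
  -- conclusion
  calc ∑' k : ℤ, (‖Xk u p k - XkN u p N k‖₊ : ℝ≥0∞)
      ≤ ∑' k : ℤ, ∑' j : Fin p → ℤ,
          Set.indicator {j | (∑ i, j i = k) ∧ N < ∏ i, wt1 (j i)} G j :=
        ENNReal.tsum_le_tsum hnorm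
    _ = ∑' j : Fin p → ℤ, Set.indicator {j | N < ∏ i, wt1 (j i)} G j := hswap
    _ ≤ ∑' j : Fin p → ℤ, ENNReal.ofReal ((N : ℝ) ^ (-s)) * ∏ i, w (j i) :=
        ENNReal.tsum_le_tsum hpoint
    _ = ENNReal.ofReal ((N : ℝ) ^ (-s)) * ∑' j : Fin p → ℤ, ∏ i, w (j i) :=
        ENNReal.tsum_mul_left
    _ = ENNReal.ofReal ((N : ℝ) ^ (-s)) * (∑' n : ℤ, w n) ^ p := by
        rw [tsum_pi_prod w p]
end
end

section
/- Let θ ∈ [0,1], p ≥ 1, j = (j₁,...,j_p) ∈ (ℤ^d)^p, and ℓ ∈ ℤ^d. Let μ₁(ℓ,j) ≥ μ₂(ℓ,j) ≥ μ₃(ℓ,j) denote the three largest values among ⟨ℓ⟩, ⟨j₁⟩, ..., ⟨j_p⟩ (with ⟨k⟩ = max(1,|k¹|,...,|k^d|)), and similarly μ₁(j) the largest among ⟨j₁⟩,...,⟨j_p⟩. Define A_θ(ℓ,j) = μ₂(ℓ,j)^θ μ₃(ℓ,j)^{1−θ} / (μ₂(ℓ,j)^θ μ₃(ℓ,j)^{1−θ}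 + μ₁(ℓ,j) − μ₂(ℓ,j)). Then ⟨ℓ⟩ · A_θ(ℓ,j) ≤ 2 μ₁(j). -/
open scoped BigOperators

noncomputable section

/-- The weight `⟨j⟩ = max(1, |j¹|, ..., |j^d|)` for `j ∈ ℤ^d`. -/
def wt {d : ℕ} (j : Fin d → ℤ) : ℕ :=
  max 1 (Finset.univ.sup fun i => (j i).natAbs)

/-- `mu k n` is the `n`-th largest value among `⟨k₁⟩, ..., ⟨k_q⟩`
(equal to `1` if `n > q`). -/
def mu {q d : ℕ} (k : Fin q → Fin d → ℤ) (n : ℕ) : ℕ :=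
  if n ≤ q then
    ((Multiset.map (fun i => wt (k i)) Finset.univ.val).sort (· ≤ ·)).getD (q - n) 1
  else 1

/-- `A_θ(k) = μ₂^θ μ₃^{1−θ} / (μ₂^θ μ₃^{1−θ} + μ₁ − μ₂)`. -/
def Atheta {q d : ℕ} (θ : ℝ) (k : Fin q → Fin d → ℤ) : ℝ :=
  ((mu k 2 : ℝ) ^ θ * (mu k 3 : ℝ) ^ (1 - θ)) /
    ((mu k 2 : ℝ) ^ θ * (mu k 3 : ℝ) ^ (1 - θ) + (mu k 1 : ℝ) - (mu k 2 : ℝ))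

lemma one_le_wt {d : ℕ} (j : Fin d → ℤ) : 1 ≤ wt j := le_max_left _ _

/-- The sorted list of weights. -/
def sl {q d : ℕ} (k : Fin q → Fin d → ℤ) : List ℕ :=
  (Multiset.map (fun i => wt (k i)) Finset.univ.val).sort (· ≤ ·)

lemma sl_sorted {q d : ℕ} (k : Fin q → Fin d → ℤ) : (sl k).Pairwise (· ≤ ·) :=
  Multiset.pairwise_sort _ _

lemma length_sl {q d : ℕ} (k : Fin q → Fin d → ℤ) : (sl k).length = q := by
  simp [sl]

lemma mem_sl {q d : ℕ} (k : Fin q → Fin d → ℤ) {x : ℕ} (hx : x ∈ sl k) :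
    ∃ i, wt (k i) = x := by
  have := (Multiset.mem_sort (α := ℕ) (· ≤ ·)).mp hx
  simpa [List.mem_ofFn] using this

lemma mu_eq_getD {q d : ℕ} (k : Fin q → Fin d → ℤ) {n : ℕ} (hn : n ≤ q) :
    mu k n = (sl k).getD (q - n) 1 := by
  simp [mu, hn, sl]

lemma sorted_le_getD_last {l : List ℕ} (hl : l.Pairwise (· ≤ ·)) {x : ℕ} (hx : x ∈ l) :
    x ≤ l.getD (l.length - 1) 1 := by
  obtain ⟨i, rfl⟩ := List.mem_iff_get.mp hx
  have hpos : 0 < l.length := lt_of_le_of_lt (Nat.zero_le _) i.2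
  have h1 : l.length - 1 < l.length := by omega
  rw [List.getD_eq_get _ _ ⟨_, h1⟩]
  have hi2 := i.2
  refine hl.rel_get_of_le (a := i) (b := ⟨l.length - 1, h1⟩) ?_
  rw [Fin.le_def]; simp; omega

lemma one_le_mu {q d : ℕ} (k : Fin q → Fin d → ℤ) (n : ℕ) : 1 ≤ mu k n := by
  unfold mu
  split
  · rcases lt_or_ge (q - n) ((Multiset.map (fun i => wt (k i)) Finset.univ.val).sort (· ≤ ·)).length with h | h
    · rw [List.getD_eq_get _ _ ⟨_, h⟩]
      have hmem := List.get_mem _ ⟨q - n, h⟩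
      obtain ⟨i, hi⟩ := mem_sl k hmem
      rw [← hi]; exact one_le_wt _
    · rw [List.getD_eq_default _ _ h]
  · exact le_refl 1

lemma mu_le_mu {q d : ℕ} (k : Fin q → Fin d → ℤ) {m n : ℕ} (hm : 1 ≤ m) (hmn : m ≤ n)
    (hn : n ≤ q) : mu k n ≤ mu k m := by
  rw [mu_eq_getD k hn, mu_eq_getD k (hmn.trans hn)]
  have h1 : q - m < (sl k).length := by rw [length_sl]; omega
  have h2 : q - n < (sl k).length := by rw [length_sl]; omega
  rw [List.getD_eq_get _ _ ⟨_, h1⟩, List.getD_eq_get _ _ ⟨_, h2⟩]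
  exact (sl_sorted k).rel_get_of_le (by simp; omega)

lemma wt_le_mu_one {q d : ℕ} (hq : 1 ≤ q) (k : Fin q → Fin d → ℤ) (i : Fin q) :
    wt (k i) ≤ mu k 1 := by
  rw [mu_eq_getD k hq]
  have hmem : wt (k i) ∈ sl k := by
    rw [sl, Multiset.mem_sort]
    exact Multiset.mem_map_of_mem _ (Finset.mem_univ i)
  have := sorted_le_getD_last (sl_sorted k) hmem
  rwa [length_sl] at this

lemma sl_cons {d p : ℕ} (ℓ : Fin d → ℤ) (j : Fin p → Fin d → ℤ)
    (h : ∀ i, wt (j i) ≤ wt ℓ) :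
    sl (Fin.cons ℓ j : Fin (p + 1) → Fin d → ℤ) = sl j ++ [wt ℓ] := by
  refine (fun hp h1 h2 => List.Perm.eq_of_pairwise' (r := (· ≤ · : ℕ → ℕ → Prop)) h1 h2 hp) ?_ ?_ ?_
  · have h1 : (↑(sl (Fin.cons ℓ j : Fin (p + 1) → Fin d → ℤ)) : Multiset ℕ)
        = Multiset.map (fun i => wt ((Fin.cons ℓ j : Fin (p + 1) → Fin d → ℤ) i))
            Finset.univ.val := Multiset.sort_eq _ _
    have h2 : (↑(sl j) : Multiset ℕ) = Multiset.map (fun i => wt (j i)) Finset.univ.val :=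
      Multiset.sort_eq _ _
    have h3 : Multiset.map (fun i => wt ((Fin.cons ℓ j : Fin (p + 1) → Fin d → ℤ) i))
        Finset.univ.val = ↑(List.ofFn fun i => wt ((Fin.cons ℓ j : Fin (p + 1) → Fin d → ℤ) i)) :=
      Fin.univ_val_map _
    have h4 : Multiset.map (fun i => wt (j i)) Finset.univ.val
        = ↑(List.ofFn fun i => wt (j i)) := Fin.univ_val_map _
    have h5 : (List.ofFn fun i => wt ((Fin.cons ℓ j : Fin (p + 1) → Fin d → ℤ) i))
        = wt ℓ :: List.ofFn fun i => wt (j i) := by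
      rw [List.ofFn_succ]; simp
    have hperm1 : (sl (Fin.cons ℓ j : Fin (p + 1) → Fin d → ℤ)).Perm
        (wt ℓ :: List.ofFn fun i => wt (j i)) :=
      Multiset.coe_eq_coe.mp (by rw [h1, h3, h5])
    have hperm2 : (List.ofFn fun i => wt (j i)).Perm (sl j) :=
      Multiset.coe_eq_coe.mp (by rw [h4.symm, ← h2])
    exact hperm1.trans ((hperm2.cons _).trans (List.perm_append_singleton _ _).symm)
  · exact sl_sorted _
  · rw [List.pairwise_append]
    refine ⟨sl_sorted j, by simp, ?_⟩
    intro a ha b hb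
    rw [List.mem_singleton] at hb
    subst hb
    obtain ⟨i, hi⟩ := mem_sl j ha
    rw [← hi]; exact h i

lemma mu_cons_one {d p : ℕ} (hp : 1 ≤ p) (ℓ : Fin d → ℤ) (j : Fin p → Fin d → ℤ)
    (h : ∀ i, wt (j i) ≤ wt ℓ) :
    mu (Fin.cons ℓ j : Fin (p + 1) → Fin d → ℤ) 1 = wt ℓ := by
  rw [mu_eq_getD _ (by omega), sl_cons ℓ j h]
  have hlen : (sl j).length = p := length_sl j
  rw [show p + 1 - 1 = (sl j).length from by omega]
  rw [List.getD_eq_getElem _ _ (by simp), List.getElem_append_right (le_refl _)]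
  simp

lemma mu_cons_two {d p : ℕ} (hp : 1 ≤ p) (ℓ : Fin d → ℤ) (j : Fin p → Fin d → ℤ)
    (h : ∀ i, wt (j i) ≤ wt ℓ) :
    mu (Fin.cons ℓ j : Fin (p + 1) → Fin d → ℤ) 2 = mu j 1 := by
  rw [mu_eq_getD _ (by omega), sl_cons ℓ j h, mu_eq_getD _ hp]
  have hlen : (sl j).length = p := length_sl j
  have he : p + 1 - 2 = p - 1 := by omega
  rw [he, List.getD_append _ _ _ _ (by omega)]

theorem stmt6 (d p : ℕ) (hd : 1 ≤ d) (hp : 1 ≤ p) (θ : ℝ) (hθ : 0 ≤ θ ∧ θ ≤ 1)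
    (ℓ : Fin d → ℤ) (j : Fin p → Fin d → ℤ) :
    (wt ℓ : ℝ) * Atheta θ (Fin.cons ℓ j) ≤ 2 * (mu j 1 : ℝ) := by
  obtain ⟨hθ0, hθ1⟩ := hθ
  set k : Fin (p + 1) → Fin d → ℤ := Fin.cons ℓ j with hk
  -- basic facts about μ's of k
  have hq2 : 2 ≤ p + 1 := by omega
  have hc1 : (1 : ℝ) ≤ (mu k 3 : ℝ) := by exact_mod_cast one_le_mu k 3
  have hb1 : (1 : ℝ) ≤ (mu k 2 : ℝ) := by exact_mod_cast one_le_mu k 2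
  have hcb : (mu k 3 : ℝ) ≤ (mu k 2 : ℝ) := by
    rcases le_or_gt 3 (p + 1) with h3 | h3
    · exact_mod_cast mu_le_mu k (by norm_num) (by norm_num) h3
    · have h31 : mu k 3 = 1 := by rw [mu, if_neg (by omega)]
      rw [h31]; exact_mod_cast hb1
  have hba : (mu k 2 : ℝ) ≤ (mu k 1 : ℝ) := by
    exact_mod_cast mu_le_mu k (by norm_num) (by norm_num) hq2
  -- facts about B = μ₂^θ μ₃^{1-θ}
  set B : ℝ := (mu k 2 : ℝ) ^ θ * (mu k 3 : ℝ) ^ (1 - θ) with hB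
  have hb0 : (0 : ℝ) < (mu k 2 : ℝ) := lt_of_lt_of_le one_pos hb1
  have hc0 : (0 : ℝ) < (mu k 3 : ℝ) := lt_of_lt_of_le one_pos hc1
  have hB0 : 0 < B := mul_pos (Real.rpow_pos_of_pos hb0 _) (Real.rpow_pos_of_pos hc0 _)
  have hBb : B ≤ (mu k 2 : ℝ) := by
    have h1 : (mu k 3 : ℝ) ^ (1 - θ) ≤ (mu k 2 : ℝ) ^ (1 - θ) :=
      Real.rpow_le_rpow hc0.le hcb (by linarith)
    have h2 : B ≤ (mu k 2 : ℝ) ^ θ * (mu k 2 : ℝ) ^ (1 - θ) := by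
      apply mul_le_mul_of_nonneg_left h1 (Real.rpow_pos_of_pos hb0 _).le
    calc B ≤ (mu k 2 : ℝ) ^ θ * (mu k 2 : ℝ) ^ (1 - θ) := h2
      _ = (mu k 2 : ℝ) ^ (θ + (1 - θ)) := (Real.rpow_add hb0 _ _).symm
      _ = (mu k 2 : ℝ) := by norm_num
  have hD0 : 0 < B + (mu k 1 : ℝ) - (mu k 2 : ℝ) := by linarith
  have hA : Atheta θ k = B / (B + (mu k 1 : ℝ) - (mu k 2 : ℝ)) := by rw [hB]; rfl
  have hm0 : (1 : ℝ) ≤ (mu j 1 : ℝ) := by exact_mod_cast one_le_mu j 1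
  have hw0 : (0 : ℝ) ≤ (wt ℓ : ℝ) := by positivity
  by_cases hcase : wt ℓ ≤ mu j 1
  · -- easy case: wt ℓ ≤ μ₁(j), use A ≤ 1
    have hA1 : Atheta θ k ≤ 1 := by
      rw [hA, div_le_one hD0]; linarith
    have hA0 : 0 ≤ Atheta θ k := by
      rw [hA]; positivity
    have hwm : (wt ℓ : ℝ) ≤ (mu j 1 : ℝ) := by exact_mod_cast hcase
    nlinarith [mul_le_of_le_one_right hw0 hA1]
  · -- hard case: wt ℓ > μ₁(j)
    push_neg at hcase
    have hle : ∀ i, wt (j i) ≤ wt ℓ := fun i =>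
      le_of_lt (lt_of_le_of_lt (wt_le_mu_one hp j i) hcase)
    have h1 : mu k 1 = wt ℓ := mu_cons_one hp ℓ j hle
    have h2 : mu k 2 = mu j 1 := mu_cons_two hp ℓ j hle
    set t : ℝ := (wt ℓ : ℝ) with ht
    set m : ℝ := (mu j 1 : ℝ) with hm
    rw [hA, h1, h2]
    rw [h2] at hBb
    have hmt : m ≤ t := by rw [ht, hm]; exact_mod_cast hcase.le
    have hD0' : 0 < B + t - m := by rw [h1, h2] at hD0; exact hD0
    have hkey : t * B ≤ m * (B + t - m) := by
      nlinarith [mul_nonneg (sub_nonneg.mpr hmt) (sub_nonneg.mpr hBb)]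
    have hfin : t * (B / (B + t - m)) ≤ m := by
      rw [← mul_div_assoc, div_le_iff₀ hD0']
      linarith
    linarith
end
end
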